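/- Let φ be an endomorphism of ℤⁿ given by an integer matrix T with det T ≠ 0, and let Λφ denote the induced endomorphism of the exterior algebra Λ*(ℤⁿ). There exists a unique endomorphism b of Λ*(ℤⁿ) satisfying b ∘ Λφ = |det T| · id, and if φ = k·id then b restricted to Λᵖ(ℤⁿ) is multiplication by k^{n-p}. -/

import Mathlib

open ExteriorAlgebra

namespace Stmt17Aux

variable (n : ℕ)

noncomputable abbrev eStd : Fin n → (Fin n → ℤ) := fun i => Pi.single i 1

noncomputable def w (S : Finset (Fin n)) : ExteriorAlgebra ℤ (Fin n → ℤ) :=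
  ιMulti ℤ S.card (fun i => eStd n (S.orderIsoOfFin rfl i))

noncomputable def AS (S : Finset (Fin n)) : (Fin n → ℤ) [⋀^Fin S.card]→ₗ[ℤ] ℤ :=
  (Matrix.detRowAlternating).compLinearMap
    (LinearMap.funLeft ℤ ℤ (fun j : Fin S.card => ((S.orderIsoOfFin rfl j : Fin n))))

noncomputable def fS (S : Finset (Fin n)) : ∀ p, (Fin n → ℤ) [⋀^Fin p]→ₗ[ℤ] ℤ :=
  fun p => if h : p = S.card then (AS n S).domDomCongr (finCongr h.symm) else 0

noncomputable def lam (S : Finset (Fin n)) : ExteriorAlgebra ℤ (Fin n → ℤ) →ₗ[ℤ] ℤ :=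
  liftAlternating (fS n S)

theorem lam_w (S T : Finset (Fin n)) : lam n S (w n T) = if S = T then 1 else 0 := by
  classical
  rw [lam, w, liftAlternating_apply_ιMulti, fS]
  by_cases hc : T.card = S.card
  · rw [dif_pos hc]
    rw [AlternatingMap.domDomCongr_apply]
    by_cases hST : S = T
    · subst hST
      rw [if_pos rfl]
      rw [AS, AlternatingMap.compLinearMap_apply]
      have : (fun i : Fin S.card =>
          LinearMap.funLeft ℤ ℤ (fun j : Fin S.card => ((S.orderIsoOfFin rfl j : Fin n)))
            ((fun i => eStd n (S.orderIsoOfFin rfl i)) ∘ (finCongr hc.symm) <| i)) =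
          fun i : Fin S.card => (1 : Matrix (Fin S.card) (Fin S.card) ℤ) i := by
        funext i
        funext j
        simp only [LinearMap.funLeft_apply, Function.comp_apply]
        have hci : (finCongr hc.symm) i = i := Fin.ext rfl
        rw [hci]
        by_cases hij : i = j
        · subst hij; simp [Pi.single_apply, Matrix.one_apply]
        · have : (S.orderIsoOfFin rfl i : Fin n) ≠ (S.orderIsoOfFin rfl j : Fin n) := by
            intro h
            exact hij ((S.orderIsoOfFin rfl).injective (Subtype.ext h))
          simp only [Pi.single_apply, Matrix.one_apply, this, if_false]
          rw [if_neg (fun h => this h.symm), if_neg hij]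
      rw [this]
      exact Matrix.det_one
    · rw [if_neg hST]
      rw [AS, AlternatingMap.compLinearMap_apply]
      -- find element of S not in T
      have hsub : ¬ S ⊆ T := by
        intro hsub
        exact hST (Finset.eq_of_subset_of_card_le hsub (le_of_eq hc))
      obtain ⟨s, hsS, hsT⟩ := Finset.not_subset.mp hsub
      apply Matrix.det_eq_zero_of_column_eq_zero ((S.orderIsoOfFin rfl).symm ⟨s, hsS⟩)
      intro j
      simp only [LinearMap.funLeft_apply, Function.comp_apply, OrderIso.apply_symm_apply]
      have : (T.orderIsoOfFin rfl ((finCongr hc.symm) j) : Fin n) ≠ s := by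
        intro h
        exact hsT (h ▸ (T.orderIsoOfFin rfl _).2)
      simp only [Pi.single_apply]
      rw [if_neg (fun h => this h.symm)]
  · rw [dif_neg hc]
    simp only [AlternatingMap.zero_apply]
    rw [if_neg]
    rintro rfl
    exact hc rfl

end Stmt17Aux

namespace Stmt17Aux

variable (n : ℕ)

theorem w_indep : LinearIndependent ℤ (w n) := by
  classical
  rw [Fintype.linearIndependent_iff]
  intro g hg S
  have h := congrArg (lam n S) hg
  rw [map_sum, map_zero] at h
  have h2 : ∀ T ∈ Finset.univ, lam n S (g T • w n T) = if S = T then g T else 0 := by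
    intro T _
    rw [map_smul, lam_w]
    by_cases h' : S = T <;> simp [h']
  rw [Finset.sum_congr rfl h2, Finset.sum_ite_eq] at h
  simpa using h

theorem w_mem_key (p : ℕ) (r : Fin p → Fin n) :
    ιMulti ℤ p (fun i => eStd n (r i)) ∈ Submodule.span ℤ (Set.range (w n)) := by
  classical
  by_cases hr : Function.Injective r
  · have key : ∀ (S : Finset (Fin n)) (q : ℕ) (_ : S.card = q) (r : Fin q → Fin n),
        Function.Injective r → (∀ j, r j ∈ S) →
        ιMulti ℤ q (fun i => eStd n (r i)) ∈ Submodule.span ℤ (Set.range (w n)) := by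
      intro S q hq
      subst hq
      intro r hr hmem
      set σ := S.orderIsoOfFin rfl with hσ
      have hg : Function.Injective (fun j : Fin S.card => σ.symm ⟨r j, hmem j⟩) := by
        intro a b hab
        apply hr
        have := congrArg (fun z => (σ z : Fin n)) hab
        simpa using this
      have hbij := (Finite.injective_iff_bijective).mp hg
      set π : Equiv.Perm (Fin S.card) := Equiv.ofBijective _ hbij with hπ
      have hcomp : (fun i => eStd n (r i)) = (fun i => eStd n (σ i)) ∘ π := by
        funext i
        simp only [Function.comp_apply, hπ, Equiv.ofBijective_apply]
        congr 1
        have : σ (σ.symm ⟨r i, hmem i⟩) = ⟨r i, hmem i⟩ := σ.apply_symm_apply _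
        rw [this]
      rw [hcomp, AlternatingMap.map_perm]
      rw [Units.smul_def]
      exact Submodule.smul_mem _ _ (Submodule.subset_span (Set.mem_range_self S))
    have hcard : (Finset.univ.image r).card = p := by
      rw [Finset.card_image_of_injective _ hr, Finset.card_univ, Fintype.card_fin]
    exact key (Finset.univ.image r) p hcard r hr
      (fun j => Finset.mem_image_of_mem r (Finset.mem_univ j))
  · rw [AlternatingMap.map_eq_zero_of_not_injective]
    · exact Submodule.zero_mem _
    · intro hinj
      exact hr (Function.Injective.of_comp (f := eStd n) hinj)

theorem w_span : ⊤ ≤ Submodule.span ℤ (Set.range (w n)) := by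
  classical
  rw [← ιMulti_span (R := ℤ) (M := Fin n → ℤ)]
  rw [Submodule.span_le]
  rintro _ ⟨⟨p, v⟩, rfl⟩
  show ιMulti ℤ p v ∈ (Submodule.span ℤ (Set.range (w n)) : Set _)
  have h1 : v = fun i => ∑ j, v i j • eStd n j := by
    funext i
    ext j'
    simp [eStd, Pi.single_apply, Finset.sum_apply]
  have expand : ιMulti ℤ p v
      = ∑ r : Fin p → Fin n, (∏ i, v i (r i)) • ιMulti ℤ p (fun i => eStd n (r i)) := by
    conv_lhs => rw [h1]
    have h2 := MultilinearMap.map_sum (ιMulti ℤ p (M := Fin n → ℤ)).toMultilinearMap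
      (fun i j => v i j • eStd n j)
    rw [show ((ιMulti ℤ p (M := Fin n → ℤ)) fun i => ∑ j, v i j • eStd n j)
      = ((ιMulti ℤ p (M := Fin n → ℤ)).toMultilinearMap fun i => ∑ j, v i j • eStd n j) from rfl]
    rw [h2]
    apply Finset.sum_congr rfl
    intro r _
    exact (ιMulti ℤ p (M := Fin n → ℤ)).toMultilinearMap.map_smul_univ _ _
  rw [expand]
  exact Submodule.sum_mem _ (fun r _ => Submodule.smul_mem _ _ (w_mem_key n p r))

noncomputable def basisE : Module.Basis (Finset (Fin n)) ℤ (ExteriorAlgebra ℤ (Fin n → ℤ)) :=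
  Module.Basis.mk (w_indep n) (w_span n)

theorem basisE_apply (S : Finset (Fin n)) : basisE n S = w n S := Module.Basis.mk_apply _ _ _

theorem torsionfree (k : ℤ) (hk : k ≠ 0) (x : ExteriorAlgebra ℤ (Fin n → ℤ))
    (h : k • x = 0) : x = 0 := by
  have h2 := congrArg (basisE n).repr h
  rw [map_smul, map_zero] at h2
  have h3 : (basisE n).repr x = 0 := by
    ext S
    have := congrArg (fun f => f S) h2
    simp only [Finsupp.coe_smul, Pi.smul_apply, smul_eq_mul, Finsupp.coe_zero, Pi.zero_apply] at this
    rcases mul_eq_zero.mp this with h' | h'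
    · exact absurd h' hk
    · simpa using h'
  exact (basisE n).repr.map_eq_zero_iff.mp h3

end Stmt17Aux

namespace Stmt17Aux
variable (n : ℕ)

theorem map_w (ψ : (Fin n → ℤ) →ₗ[ℤ] (Fin n → ℤ)) (a : Fin n → ℤ)
    (hψ : ∀ i, ψ (eStd n i) = a i • eStd n i) (S : Finset (Fin n)) :
    (ExteriorAlgebra.map ψ) (w n S) = (∏ i ∈ S, a i) • w n S := by
  classical
  rw [w, map_apply_ιMulti]
  have h1 : (ψ ∘ fun i => eStd n (S.orderIsoOfFin rfl i))
      = fun i => a (S.orderIsoOfFin rfl i) • eStd n (S.orderIsoOfFin rfl i) := by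
    funext i; exact hψ _
  rw [h1]
  have h2 := (ιMulti ℤ S.card (M := Fin n → ℤ)).toMultilinearMap.map_smul_univ
      (fun i => a (S.orderIsoOfFin rfl i)) (fun i => eStd n (S.orderIsoOfFin rfl i))
  rw [show ((ιMulti ℤ S.card) fun i => a (S.orderIsoOfFin rfl i) • eStd n (S.orderIsoOfFin rfl i))
      = ((ιMulti ℤ S.card (M := Fin n → ℤ)).toMultilinearMap
          fun i => a (S.orderIsoOfFin rfl i) • eStd n (S.orderIsoOfFin rfl i)) from rfl, h2]
  congr 1
  rw [← Finset.prod_coe_sort S a]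
  exact Fintype.prod_equiv (S.orderIsoOfFin rfl).toEquiv _ _ (fun j => rfl)

theorem diag (T : Matrix (Fin n) (Fin n) ℤ) (hT : T.det ≠ 0) :
    ∃ (P Q : (Fin n → ℤ) ≃ₗ[ℤ] (Fin n → ℤ)) (a : Fin n → ℤ),
      (∀ i, a i ≠ 0) ∧ |∏ i, a i| = |T.det| ∧
      (∀ i, (Q.toLinearMap ∘ₗ Matrix.toLin' T ∘ₗ P.toLinearMap) (eStd n i) = a i • eStd n i) := by
  classical
  set φ := Matrix.toLin' T with hφ
  have hinj : Function.Injective φ := by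
    intro v w hvw
    have h0 : T.mulVec (v - w) = 0 := by
      have : T.mulVec v = T.mulVec w := by
        simpa [hφ, Matrix.toLin'_apply] using hvw
      rw [Matrix.mulVec_sub, this, sub_self]
    have := Matrix.eq_zero_of_mulVec_eq_zero hT h0
    exact sub_eq_zero.mp this
  obtain ⟨m, snf⟩ := Submodule.smithNormalForm (Pi.basisFun ℤ (Fin n)) (LinearMap.range φ)
  set u : (Fin n → ℤ) ≃ₗ[ℤ] LinearMap.range φ := LinearEquiv.ofInjective φ hinj with hu
  have hmn : n = m := by
    have e := (snf.bN.map u.symm).indexEquiv (Pi.basisFun ℤ (Fin n))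
    have := Fintype.card_congr e
    simpa using this.symm
  subst hmn
  have hfbij : Function.Bijective snf.f := (Finite.injective_iff_bijective).mp snf.f.injective
  set fe : Fin n ≃ Fin n := Equiv.ofBijective snf.f hfbij with hfe
  set c0 : Module.Basis (Fin n) ℤ (Fin n → ℤ) := snf.bN.map u.symm with hc0
  set P : (Fin n → ℤ) ≃ₗ[ℤ] (Fin n → ℤ) := (Pi.basisFun ℤ (Fin n)).equiv c0 (Equiv.refl _) with hP
  set Q : (Fin n → ℤ) ≃ₗ[ℤ] (Fin n → ℤ) := snf.bM.equiv (Pi.basisFun ℤ (Fin n)) fe.symm with hQ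
  have hφc0 : ∀ i, φ (c0 i) = snf.a i • snf.bM (snf.f i) := by
    intro i
    have h1 : φ (c0 i) = ((snf.bN i : (Fin n → ℤ))) := by
      rw [hc0]
      simp only [Module.Basis.map_apply]
      have : φ (u.symm (snf.bN i)) = (u (u.symm (snf.bN i)) : (Fin n → ℤ)) := by
        rw [hu]; simp [LinearEquiv.ofInjective_apply]
      rw [this, u.apply_symm_apply]
    rw [h1, snf.snf i]
  have hdiag : ∀ i, (Q.toLinearMap ∘ₗ φ ∘ₗ P.toLinearMap) (eStd n i) = snf.a i • eStd n i := by
    intro i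
    have hPe : P (eStd n i) = c0 i := by
      have := (Pi.basisFun ℤ (Fin n)).equiv_apply (i := i) (b' := c0) (e := Equiv.refl _)
      simpa [Pi.basisFun_apply] using this
    have hQb : ∀ j, Q (snf.bM j) = eStd n (fe.symm j) := by
      intro j
      rw [hQ, Module.Basis.equiv_apply, Pi.basisFun_apply]
    simp only [LinearMap.comp_apply, LinearEquiv.coe_coe]
    rw [hPe, hφc0 i, map_smul, hQb]
    have h5 : fe.symm (snf.f i) = i := by
      have h6 : snf.f i = fe i := rfl
      rw [h6, fe.symm_apply_apply]
    rw [h5]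
  refine ⟨P, Q, snf.a, ?_, ?_, hdiag⟩
  · intro i hai
    have h := snf.snf i
    rw [hai, zero_smul] at h
    exact (snf.bN.ne_zero i) (Subtype.ext h)
  · have hdet1 : LinearMap.det φ = T.det := LinearMap.det_toLin' T
    have hmat : LinearMap.toMatrix (Pi.basisFun ℤ (Fin n)) (Pi.basisFun ℤ (Fin n))
        (Q.toLinearMap ∘ₗ φ ∘ₗ P.toLinearMap) = Matrix.diagonal snf.a := by
      ext i j
      rw [LinearMap.toMatrix_apply]
      have : (Q.toLinearMap ∘ₗ φ ∘ₗ P.toLinearMap) ((Pi.basisFun ℤ (Fin n)) j)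
          = snf.a j • eStd n j := by
        rw [Pi.basisFun_apply]
        exact hdiag j
      rw [this]
      rw [Pi.basisFun_repr]
      simp only [Pi.smul_apply, smul_eq_mul, Matrix.diagonal_apply, eStd, Pi.single_apply]
      by_cases hij : i = j
      · subst hij; simp
      · simp [hij]
    have hdet2 : LinearMap.det (Q.toLinearMap ∘ₗ φ ∘ₗ P.toLinearMap) = ∏ i, snf.a i := by
      rw [← LinearMap.det_toMatrix (Pi.basisFun ℤ (Fin n)), hmat, Matrix.det_diagonal]
    have hdet3 : LinearMap.det (Q.toLinearMap ∘ₗ φ ∘ₗ P.toLinearMap)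
        = LinearMap.det Q.toLinearMap * (LinearMap.det φ * LinearMap.det P.toLinearMap) := by
      rw [LinearMap.det_comp, LinearMap.det_comp]
    have habs : ∀ (e : (Fin n → ℤ) ≃ₗ[ℤ] (Fin n → ℤ)), |LinearMap.det e.toLinearMap| = 1 := by
      intro e
      rcases Int.isUnit_iff.mp (LinearEquiv.isUnit_det' e) with h | h <;> rw [h] <;> rfl
    rw [← hdet2, hdet3, abs_mul, abs_mul, habs P, habs Q, hdet1, one_mul, mul_one]

end Stmt17Aux

namespace Stmt17Aux
variable (n : ℕ)

theorem map_symm_cancel (P : (Fin n → ℤ) ≃ₗ[ℤ] (Fin n → ℤ)) (x : ExteriorAlgebra ℤ (Fin n → ℤ)) :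
    (ExteriorAlgebra.map P.toLinearMap) ((ExteriorAlgebra.map P.symm.toLinearMap) x) = x := by
  have h1 : P.toLinearMap ∘ₗ P.symm.toLinearMap = LinearMap.id := by ext v; simp
  have h2 := ExteriorAlgebra.map_comp_map (R := ℤ) P.symm.toLinearMap P.toLinearMap
  have h3 := congrArg (fun (g : ExteriorAlgebra ℤ (Fin n → ℤ) →ₐ[ℤ] ExteriorAlgebra ℤ (Fin n → ℤ))
    => g x) h2
  simp only [AlgHom.comp_apply] at h3
  rw [h3, h1, ExteriorAlgebra.map_id]
  rfl

theorem key (T : Matrix (Fin n) (Fin n) ℤ) (hT : T.det ≠ 0) :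
    ∃ b : ExteriorAlgebra ℤ (Fin n → ℤ) →ₗ[ℤ] ExteriorAlgebra ℤ (Fin n → ℤ),
      (b ∘ₗ (ExteriorAlgebra.map (Matrix.toLin' T)).toLinearMap =
        |T.det| • (LinearMap.id : ExteriorAlgebra ℤ (Fin n → ℤ) →ₗ[ℤ] _)) ∧
      ∀ b' : ExteriorAlgebra ℤ (Fin n → ℤ) →ₗ[ℤ] ExteriorAlgebra ℤ (Fin n → ℤ),
        (b' ∘ₗ (ExteriorAlgebra.map (Matrix.toLin' T)).toLinearMap =
          |T.det| • (LinearMap.id : ExteriorAlgebra ℤ (Fin n → ℤ) →ₗ[ℤ] _)) → b' = b := by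
  classical
  obtain ⟨P, Q, a, ha, habs, hdiag⟩ := diag n T hT
  set φ := Matrix.toLin' T with hφ
  set ψ := Q.toLinearMap ∘ₗ φ ∘ₗ P.toLinearMap with hψ
  have hprodS : ∀ S : Finset (Fin n),
      (ExteriorAlgebra.map ψ) (w n S) = (∏ i ∈ S, a i) • w n S :=
    map_w n ψ a hdiag
  set ee : ℤ := if 0 ≤ ∏ i, a i then 1 else -1 with hee
  have heeprod : ∀ S : Finset (Fin n), (∏ i ∈ S, a i) * (ee * ∏ i ∈ Sᶜ, a i) = |T.det| := by
    intro S
    rw [← habs, mul_comm ee, ← mul_assoc, Finset.prod_mul_prod_compl, hee]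
    split_ifs with h
    · rw [mul_one, abs_of_nonneg h]
    · rw [abs_of_neg (lt_of_not_ge h)]; ring
  set bD : ExteriorAlgebra ℤ (Fin n → ℤ) →ₗ[ℤ] ExteriorAlgebra ℤ (Fin n → ℤ) :=
    (basisE n).constr ℤ (fun S => (ee * ∏ i ∈ Sᶜ, a i) • w n S) with hbD
  have hbDw : ∀ S, bD (w n S) = (ee * ∏ i ∈ Sᶜ, a i) • w n S := by
    intro S
    rw [← basisE_apply, hbD, Module.Basis.constr_basis, basisE_apply]
  have hbDψ : ∀ x, bD ((ExteriorAlgebra.map ψ) x) = |T.det| • x := by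
    have hext : bD ∘ₗ (ExteriorAlgebra.map ψ).toLinearMap = |T.det| • LinearMap.id := by
      apply (basisE n).ext
      intro S
      simp only [LinearMap.comp_apply, AlgHom.toLinearMap_apply, LinearMap.smul_apply,
        LinearMap.id_apply]
      rw [basisE_apply, hprodS, map_smul, hbDw, smul_smul, heeprod]
    intro x
    have := LinearMap.congr_fun hext x
    simpa using this
  set b : ExteriorAlgebra ℤ (Fin n → ℤ) →ₗ[ℤ] ExteriorAlgebra ℤ (Fin n → ℤ) :=
    (ExteriorAlgebra.map P.toLinearMap).toLinearMap ∘ₗ bD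
      ∘ₗ (ExteriorAlgebra.map Q.toLinearMap).toLinearMap with hb
  have hQφ : Q.toLinearMap ∘ₗ φ = ψ ∘ₗ P.symm.toLinearMap := by
    rw [hψ]; ext v; simp
  have hmain : ∀ x, b ((ExteriorAlgebra.map φ) x) = |T.det| • x := by
    intro x
    have h1 : (ExteriorAlgebra.map Q.toLinearMap) ((ExteriorAlgebra.map φ) x)
        = (ExteriorAlgebra.map ψ) ((ExteriorAlgebra.map P.symm.toLinearMap) x) := by
      have e2 := congrArg (fun (g : ExteriorAlgebra ℤ (Fin n → ℤ) →ₐ[ℤ] _) => g x)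
        (ExteriorAlgebra.map_comp_map (R := ℤ) φ Q.toLinearMap)
      have e3 := congrArg (fun (g : ExteriorAlgebra ℤ (Fin n → ℤ) →ₐ[ℤ] _) => g x)
        (ExteriorAlgebra.map_comp_map (R := ℤ) P.symm.toLinearMap ψ)
      simp only [AlgHom.comp_apply] at e2 e3
      rw [e2, hQφ, ← e3]
    show (ExteriorAlgebra.map P.toLinearMap)
      (bD ((ExteriorAlgebra.map Q.toLinearMap) ((ExteriorAlgebra.map φ) x))) = _
    rw [h1, hbDψ, map_smul, map_symm_cancel]
  refine ⟨b, ?_, ?_⟩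
  · refine LinearMap.ext fun x => ?_
    simp only [LinearMap.comp_apply, AlgHom.toLinearMap_apply, LinearMap.smul_apply,
      LinearMap.id_apply]
    exact hmain x
  · intro b' hb'
    have hb'x : ∀ x, b' ((ExteriorAlgebra.map φ) x) = |T.det| • x := by
      intro x
      have := LinearMap.congr_fun hb' x
      simpa using this
    have hdiff : ∀ x, (b' - b) ((ExteriorAlgebra.map φ) x) = 0 := by
      intro x
      rw [LinearMap.sub_apply, hb'x x, hmain x, sub_self]
    have hφP : φ ∘ₗ P.toLinearMap = Q.symm.toLinearMap ∘ₗ ψ := by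
      rw [hψ]; ext v; simp
    have hc : ∀ S, (b' - b) ((ExteriorAlgebra.map Q.symm.toLinearMap) (w n S)) = 0 := by
      intro S
      have h0 := hdiff ((ExteriorAlgebra.map P.toLinearMap) (w n S))
      have e1 := congrArg (fun (g : ExteriorAlgebra ℤ (Fin n → ℤ) →ₐ[ℤ] _) => g (w n S))
        (ExteriorAlgebra.map_comp_map (R := ℤ) P.toLinearMap φ)
      have e2 := congrArg (fun (g : ExteriorAlgebra ℤ (Fin n → ℤ) →ₐ[ℤ] _) => g (w n S))
        (ExteriorAlgebra.map_comp_map (R := ℤ) ψ Q.symm.toLinearMap)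
      simp only [AlgHom.comp_apply] at e1 e2
      rw [e1, hφP, ← e2, hprodS, map_smul, map_smul] at h0
      exact torsionfree n _ (Finset.prod_ne_zero_iff.mpr (fun i _ => ha i)) _ h0
    have hzero : (b' - b) ∘ₗ (ExteriorAlgebra.map Q.symm.toLinearMap).toLinearMap = 0 := by
      apply (basisE n).ext
      intro S
      simp only [LinearMap.comp_apply, AlgHom.toLinearMap_apply, LinearMap.zero_apply]
      rw [basisE_apply]
      exact hc S
    have hfin : ∀ x, (b' - b) x = 0 := by
      intro x
      have h1 := LinearMap.congr_fun hzero ((ExteriorAlgebra.map Q.toLinearMap) x)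
      have h2 : (ExteriorAlgebra.map Q.symm.toLinearMap) ((ExteriorAlgebra.map Q.toLinearMap) x)
          = x := by
        have := map_symm_cancel n Q.symm x
        simpa using this
      simp only [LinearMap.comp_apply, AlgHom.toLinearMap_apply, LinearMap.zero_apply, h2] at h1
      exact h1
    exact sub_eq_zero.mp (LinearMap.ext fun x => by rw [hfin x, LinearMap.zero_apply])

end Stmt17Aux

theorem stmt17 (n : ℕ) (T : Matrix (Fin n) (Fin n) ℤ) (hT : T.det ≠ 0) :
    (∃! b : ExteriorAlgebra ℤ (Fin n → ℤ) →ₗ[ℤ] ExteriorAlgebra ℤ (Fin n → ℤ),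
      b ∘ₗ (ExteriorAlgebra.map (Matrix.toLin' T)).toLinearMap =
        |T.det| • (LinearMap.id : ExteriorAlgebra ℤ (Fin n → ℤ) →ₗ[ℤ] _)) ∧
    ∀ (b : ExteriorAlgebra ℤ (Fin n → ℤ) →ₗ[ℤ] ExteriorAlgebra ℤ (Fin n → ℤ)),
      b ∘ₗ (ExteriorAlgebra.map (Matrix.toLin' T)).toLinearMap =
        |T.det| • (LinearMap.id : ExteriorAlgebra ℤ (Fin n → ℤ) →ₗ[ℤ] _) →
      ∀ k : ℤ, 0 < k → T = k • (1 : Matrix (Fin n) (Fin n) ℤ) →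
        ∀ (p : ℕ), p ≤ n → ∀ (x : Fin p → (Fin n → ℤ)),
          b (List.ofFn fun i => ExteriorAlgebra.ι ℤ (x i)).prod =
            k ^ (n - p) • (List.ofFn fun i => ExteriorAlgebra.ι ℤ (x i)).prod := by
  obtain ⟨b0, hb0, huniq⟩ := Stmt17Aux.key n T hT
  constructor
  · exact ⟨b0, hb0, huniq⟩
  · intro b hb k hk hTk p hp x
    have hPx : (List.ofFn fun i => ExteriorAlgebra.ι ℤ (x i)).prod
        = ExteriorAlgebra.ιMulti ℤ p x := (ExteriorAlgebra.ιMulti_apply x).symm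
    rw [hPx]
    have happ := LinearMap.congr_fun hb (ExteriorAlgebra.ιMulti ℤ p x)
    simp only [LinearMap.comp_apply, AlgHom.toLinearMap_apply, LinearMap.smul_apply,
      LinearMap.id_apply] at happ
    rw [ExteriorAlgebra.map_apply_ιMulti] at happ
    have hφ : Matrix.toLin' ((k : ℤ) • (1 : Matrix (Fin n) (Fin n) ℤ))
        = (k : ℤ) • (LinearMap.id : (Fin n → ℤ) →ₗ[ℤ] (Fin n → ℤ)) := by
      rw [map_smul, Matrix.toLin'_one]
    have hcomp : ((Matrix.toLin' T) ∘ x) = fun i => (k : ℤ) • x i := by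
      funext i
      rw [hTk]
      show Matrix.toLin' ((k : ℤ) • (1 : Matrix (Fin n) (Fin n) ℤ)) (x i) = (k : ℤ) • x i
      rw [hφ]
      rfl
    rw [hcomp] at happ
    have hsm := (ExteriorAlgebra.ιMulti ℤ p (M := Fin n → ℤ)).toMultilinearMap.map_smul_univ
      (fun _ => (k : ℤ)) x
    rw [show ((ExteriorAlgebra.ιMulti ℤ p) fun i => (k : ℤ) • x i)
        = ((ExteriorAlgebra.ιMulti ℤ p (M := Fin n → ℤ)).toMultilinearMap
            fun i => (k : ℤ) • x i) from rfl, hsm] at happ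
    rw [Finset.prod_const, Finset.card_univ, Fintype.card_fin] at happ
    have hdet : |T.det| = k ^ n := by
      rw [hTk, Matrix.det_smul, Matrix.det_one, mul_one, Fintype.card_fin]
      exact abs_of_nonneg (pow_nonneg hk.le n)
    rw [map_smul, hdet] at happ
    have hkn : (k : ℤ) ^ n = k ^ p * k ^ (n - p) := by
      rw [← pow_add, Nat.add_sub_cancel' hp]
    rw [hkn, mul_smul] at happ
    have hsub : (k : ℤ) ^ p • (b ((ExteriorAlgebra.ιMulti ℤ p) x)
        - (k : ℤ) ^ (n - p) • (ExteriorAlgebra.ιMulti ℤ p) x) = 0 := by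
      have happ' : (k : ℤ) ^ p • b ((ExteriorAlgebra.ιMulti ℤ p) x)
          = (k : ℤ) ^ p • (k : ℤ) ^ (n - p) • (ExteriorAlgebra.ιMulti ℤ p) x := happ
      rw [smul_sub, happ', sub_self]
    have hz := Stmt17Aux.torsionfree n _ (pow_ne_zero p (ne_of_gt hk)) _ hsub
    exact sub_eq_zero.mp hz
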